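/- Let n ≥ 1, let p be a prime, and let r ≥ 1. The number of sublattices Λ of ℤ^n such that ℤ^n/Λ is a cyclic group of order p^r equals p^{(n−1)(r−1)} · (p^n − 1)/(p − 1) = p^{(n−1)(r−1)} · (1 + p + ⋯ + p^{n−1}). -/

import Mathlib

section auxiliary

lemma aux_geom (p : ℕ) (hp : 1 ≤ p) (n : ℕ) :
    (∑ i ∈ Finset.range n, p ^ i) * (p - 1) + 1 = p ^ n := by
  induction n with
  | zero => simp
  | succ k ih =>
    rw [Finset.sum_range_succ, add_mul, pow_succ]
    have h1 : p ^ k * (p - 1) = p ^ k * p - p ^ k := by rw [Nat.mul_sub, mul_one]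
    have h2 : p ^ k ≤ p ^ k * p := Nat.le_mul_of_pos_right _ hp
    omega

lemma aux_cast {m : ℕ} [NeZero m] (a : ZMod m) : ((a.val : ℤ) : ZMod m) = a := by
  push_cast
  simp [ZMod.natCast_val, ZMod.cast_id]

open Function LinearMap in
lemma aux_unit_smul {n m : ℕ} [NeZero m] (f g : (Fin n → ℤ) →ₗ[ℤ] ZMod m)
    (hf : Surjective f) (hg : Surjective g) (h : ker f = ker g) :
    ∃ u : (ZMod m)ˣ, g = (u : ZMod m) • f := by
  obtain ⟨x0, hx0⟩ := hf 1
  have key : ∀ x, g x = g x0 * f x := by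
    intro x
    have hker : x - (((f x).val : ℤ)) • x0 ∈ ker f := by
      rw [LinearMap.mem_ker, map_sub, map_smul, hx0, sub_eq_zero, zsmul_eq_mul, mul_one,
        aux_cast]
    rw [h, LinearMap.mem_ker, map_sub, map_smul, sub_eq_zero] at hker
    rw [hker, zsmul_eq_mul, mul_comm, aux_cast]
  obtain ⟨y, hy⟩ := hg 1
  have hu : IsUnit (g x0) := IsUnit.of_mul_eq_one (f y) (by rw [← key y, hy])
  obtain ⟨u, hu⟩ := hu
  exact ⟨u, LinearMap.ext fun x => by rw [LinearMap.smul_apply, smul_eq_mul, key x, hu]⟩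

open Function LinearMap in
lemma aux_exists {n m : ℕ} [NeZero m] (Λ : Submodule ℤ (Fin n → ℤ))
    (h1 : IsAddCyclic ((Fin n → ℤ) ⧸ Λ)) (h2 : Nat.card ((Fin n → ℤ) ⧸ Λ) = m) :
    ∃ f : (Fin n → ℤ) →ₗ[ℤ] ZMod m, Surjective f ∧ ker f = Λ := by
  have e0 := zmodAddCyclicAddEquiv h1
  rw [h2] at e0
  refine ⟨e0.symm.toAddMonoidHom.toIntLinearMap ∘ₗ Λ.mkQ, ?_, ?_⟩
  · exact e0.symm.surjective.comp (Submodule.mkQ_surjective Λ)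
  · ext x
    simp only [LinearMap.mem_ker, LinearMap.comp_apply, AddMonoidHom.coe_toIntLinearMap,
      AddEquiv.coe_toAddMonoidHom, EmbeddingLike.map_eq_zero_iff, Submodule.mkQ_apply,
      Submodule.Quotient.mk_eq_zero]

open Function LinearMap in
lemma aux_conv {n m : ℕ} [NeZero m] (f : (Fin n → ℤ) →ₗ[ℤ] ZMod m) (hf : Surjective f) :
    IsAddCyclic ((Fin n → ℤ) ⧸ ker f) ∧ Nat.card ((Fin n → ℤ) ⧸ ker f) = m := by
  have e := f.quotKerEquivOfSurjective hf
  constructor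
  · exact isAddCyclic_of_surjective e.symm.toAddMonoidHom e.symm.surjective
  · rw [Nat.card_congr e.toEquiv, Nat.card_zmod]

open Function LinearMap in
lemma aux_smul_ker {n m : ℕ} [NeZero m] (f : (Fin n → ℤ) →ₗ[ℤ] ZMod m) (u : (ZMod m)ˣ) :
    ker ((u : ZMod m) • f) = ker f := by
  ext x
  simp only [LinearMap.mem_ker, LinearMap.smul_apply, smul_eq_mul]
  exact ⟨fun h => by simpa using congrArg (fun y => (↑u⁻¹ : ZMod m) * y) h,
    fun h => by rw [h, mul_zero]⟩

open Function LinearMap in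
lemma aux_smul_surj {n m : ℕ} [NeZero m] (f : (Fin n → ℤ) →ₗ[ℤ] ZMod m)
    (hf : Surjective f) (u : (ZMod m)ˣ) : Surjective ((u : ZMod m) • f) := by
  intro y
  obtain ⟨x, hx⟩ := hf ((↑u⁻¹ : ZMod m) * y)
  exact ⟨x, by simp [hx, ← mul_assoc]⟩

open Function LinearMap in
lemma aux_card (n m : ℕ) [NeZero m] :
    Nat.card {Λ : Submodule ℤ (Fin n → ℤ) //
        IsAddCyclic ((Fin n → ℤ) ⧸ Λ) ∧ Nat.card ((Fin n → ℤ) ⧸ Λ) = m} *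
      Nat.card (ZMod m)ˣ =
    Nat.card {f : (Fin n → ℤ) →ₗ[ℤ] ZMod m // Surjective f} := by
  set T := {Λ : Submodule ℤ (Fin n → ℤ) //
      IsAddCyclic ((Fin n → ℤ) ⧸ Λ) ∧ Nat.card ((Fin n → ℤ) ⧸ Λ) = m} with hT
  have hch : ∀ Λ : T, ∃ f : (Fin n → ℤ) →ₗ[ℤ] ZMod m, Surjective f ∧ ker f = Λ.1 :=
    fun Λ => aux_exists Λ.1 Λ.2.1 Λ.2.2
  choose F hFs hFk using hch
  have hbij : Function.Bijective
      (fun x : T × (ZMod m)ˣ =>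
        (⟨(x.2 : ZMod m) • F x.1, aux_smul_surj _ (hFs x.1) x.2⟩ :
          {f : (Fin n → ℤ) →ₗ[ℤ] ZMod m // Surjective f})) := by
    constructor
    · rintro ⟨Λ, u⟩ ⟨Λ', u'⟩ hx
      have hx' : (u : ZMod m) • F Λ = (u' : ZMod m) • F Λ' := congrArg Subtype.val hx
      have hΛ : Λ = Λ' := by
        have := congrArg LinearMap.ker hx'
        rw [aux_smul_ker, aux_smul_ker, hFk, hFk] at this
        exact Subtype.ext this
      subst hΛ
      obtain ⟨x0, hx0⟩ := hFs Λ 1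
      have := congrArg (fun f : (Fin n → ℤ) →ₗ[ℤ] ZMod m => f x0) hx'
      simp only [LinearMap.smul_apply, hx0, smul_eq_mul, mul_one] at this
      exact Prod.ext rfl (Units.ext this)
    · rintro ⟨g, hg⟩
      have hc := aux_conv g hg
      set Λ : T := ⟨ker g, hc⟩ with hΛ
      obtain ⟨u, hu⟩ := aux_unit_smul (F Λ) g (hFs Λ) hg (hFk Λ)
      exact ⟨(Λ, u), Subtype.ext hu.symm⟩
  have := Nat.card_congr (Equiv.ofBijective _ hbij)
  rw [Nat.card_prod] at this
  exact this

open Function LinearMap in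
lemma aux_surj_iff {n : ℕ} (p r : ℕ) (hp : p.Prime) (hr : 1 ≤ r) [NeZero (p ^ r)]
    (v : Fin n → ZMod (p ^ r)) :
    Surjective ((Pi.basisFun ℤ (Fin n)).constr ℕ v) ↔ ∃ i, IsUnit (v i) := by
  haveI : Fact p.Prime := ⟨hp⟩
  constructor
  · intro hsurj
    by_contra hall
    push_neg at hall
    set π := ZMod.castHom (dvd_pow_self p (by omega : r ≠ 0)) (ZMod p) with hπ
    set f := (Pi.basisFun ℤ (Fin n)).constr ℕ v with hf
    have hzero : π.toAddMonoidHom.toIntLinearMap ∘ₗ f = 0 := by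
      apply (Pi.basisFun ℤ (Fin n)).ext
      intro i
      have h1 : f ((Pi.basisFun ℤ (Fin n)) i) = v i := Module.Basis.constr_basis _ _ _ _
      have h2 : ¬ (v i).val.Coprime (p ^ r) := by
        intro hc
        exact hall i (by
          have := (ZMod.isUnit_iff_coprime (v i).val (p ^ r)).2 hc
          rwa [show (((v i).val : ℕ) : ZMod (p ^ r)) = v i by
            simp [ZMod.natCast_val, ZMod.cast_id]] at this)
      have h3 : p ∣ (v i).val := by
        rw [Nat.coprime_pow_right_iff (by omega)] at h2
        by_contra hnd
        exact h2 (Nat.Coprime.symm (hp.coprime_iff_not_dvd.2 hnd))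
      have h4 : π (v i) = 0 := by
        rw [show v i = (((v i).val : ℕ) : ZMod (p ^ r)) by
          simp [ZMod.natCast_val, ZMod.cast_id], map_natCast]
        exact (ZMod.natCast_eq_zero_iff _ p).2 h3
      simp only [Pi.basisFun_apply] at h1
      simp [h1, h4]
    obtain ⟨x, hx⟩ := hsurj 1
    have := congrArg (fun g : (Fin n → ℤ) →ₗ[ℤ] ZMod p => g x) hzero
    simp only [LinearMap.comp_apply, hx, LinearMap.zero_apply,
      AddMonoidHom.coe_toIntLinearMap, RingHom.toAddMonoidHom_eq_coe,
      AddMonoidHom.coe_coe, map_one] at this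
    exact one_ne_zero this
  · rintro ⟨i, u, hu⟩
    intro y
    refine ⟨((y * (↑u⁻¹ : (ZMod (p ^ r))ˣ)).val : ℤ) • (Pi.basisFun ℤ (Fin n)) i, ?_⟩
    rw [map_smul, Module.Basis.constr_basis, zsmul_eq_mul, aux_cast, ← hu]
    rw [mul_assoc]
    simp

noncomputable def unitsEquivIsUnit (M : Type*) [Monoid M] : Mˣ ≃ {x : M // IsUnit x} where
  toFun u := ⟨u, u.isUnit⟩
  invFun x := x.2.unit
  left_inv u := Units.ext (IsUnit.unit_spec _)
  right_inv x := Subtype.ext (x.2.unit_spec)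

lemma aux_nonunit_card (p r : ℕ) (hp : p.Prime) (hr : 1 ≤ r) [NeZero (p ^ r)] :
    Fintype.card {x : ZMod (p ^ r) // ¬ IsUnit x} = p ^ (r - 1) := by
  have h1 : Fintype.card {x : ZMod (p ^ r) // IsUnit x} = p ^ (r - 1) * (p - 1) := by
    rw [← Fintype.card_congr (unitsEquivIsUnit (ZMod (p ^ r))),
      ZMod.card_units_eq_totient, Nat.totient_prime_pow hp (by omega)]
  rw [Fintype.card_subtype_compl, h1, ZMod.card]
  obtain ⟨s, rfl⟩ : ∃ s, r = s + 1 := ⟨r - 1, by omega⟩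
  simp only [Nat.add_sub_cancel]
  have h2 : p ^ s * (p - 1) = p ^ s * p - p ^ s := by rw [Nat.mul_sub, mul_one]
  have h3 : p ^ s ≤ p ^ s * p := Nat.le_mul_of_pos_right _ hp.pos
  have h4 : p ^ (s + 1) = p ^ s * p := pow_succ p s
  omega

open Function LinearMap in
lemma aux_surj_count (n p r : ℕ) (hp : p.Prime) (hr : 1 ≤ r) [NeZero (p ^ r)] :
    Nat.card {f : (Fin n → ℤ) →ₗ[ℤ] ZMod (p ^ r) // Surjective f} + (p ^ (r - 1)) ^ n
      = (p ^ r) ^ n := by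
  have hiff : ∀ v : Fin n → ZMod (p ^ r),
      (∃ i, IsUnit (v i)) ↔ Surjective (((Pi.basisFun ℤ (Fin n)).constr ℕ) v) :=
    fun v => (aux_surj_iff p r hp hr v).symm
  have e1 : {v : Fin n → ZMod (p ^ r) // ∃ i, IsUnit (v i)} ≃
      {f : (Fin n → ℤ) →ₗ[ℤ] ZMod (p ^ r) // Surjective f} :=
    Equiv.subtypeEquiv ((Pi.basisFun ℤ (Fin n)).constr ℕ).toEquiv hiff
  rw [← Nat.card_congr e1, Nat.card_eq_fintype_card]
  have hc : Fintype.card {v : Fin n → ZMod (p ^ r) // ¬ ∃ i, IsUnit (v i)}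
      = (p ^ (r - 1)) ^ n := by
    have e2 : {v : Fin n → ZMod (p ^ r) // ¬ ∃ i, IsUnit (v i)} ≃
        (Fin n → {x : ZMod (p ^ r) // ¬ IsUnit x}) :=
      (Equiv.subtypeEquivRight (fun v => not_exists)).trans
        (Equiv.subtypePiEquivPi (p := fun _ x => ¬ IsUnit x))
    rw [Fintype.card_congr e2]
    simp [Fintype.card_pi, Finset.prod_const, aux_nonunit_card p r hp hr]
  have hcompl : Fintype.card {v : Fin n → ZMod (p ^ r) // ¬ ∃ i, IsUnit (v i)}
      = Fintype.card (Fin n → ZMod (p ^ r))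
        - Fintype.card {v : Fin n → ZMod (p ^ r) // ∃ i, IsUnit (v i)} :=
    Fintype.card_subtype_compl _
  have hle : Fintype.card {v : Fin n → ZMod (p ^ r) // ∃ i, IsUnit (v i)}
      ≤ Fintype.card (Fin n → ZMod (p ^ r)) := Fintype.card_subtype_le _
  have htot : Fintype.card (Fin n → ZMod (p ^ r)) = (p ^ r) ^ n := by
    simp [Fintype.card_pi, Finset.prod_const, ZMod.card]
  clear hiff e1
  set A := Fintype.card {v : Fin n → ZMod (p ^ r) // ∃ i, IsUnit (v i)} with hA
  set B := Fintype.card {v : Fin n → ZMod (p ^ r) // ¬ ∃ i, IsUnit (v i)} with hB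
  set C := Fintype.card (Fin n → ZMod (p ^ r)) with hCC
  set D := (p ^ (r - 1)) ^ n
  set E := (p ^ r) ^ n
  clear_value A B C D E
  clear hA hB hCC
  omega

end auxiliary

/-- Let n ≥ 1, p prime, r ≥ 1. The number of sublattices Λ of ℤ^n with ℤ^n/Λ
cyclic of order p^r equals p^{(n−1)(r−1)}·(p^n − 1)/(p − 1) = p^{(n−1)(r−1)}·(1 + p + ⋯ + p^{n−1}). -/
theorem stmt15 (n : ℕ) (hn : 1 ≤ n) (p : ℕ) (hp : p.Prime) (r : ℕ) (hr : 1 ≤ r) :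
    Nat.card {Λ : Submodule ℤ (Fin n → ℤ) //
        IsAddCyclic ((Fin n → ℤ) ⧸ Λ) ∧ Nat.card ((Fin n → ℤ) ⧸ Λ) = p ^ r} =
      p ^ ((n - 1) * (r - 1)) * ((p ^ n - 1) / (p - 1)) ∧
    Nat.card {Λ : Submodule ℤ (Fin n → ℤ) //
        IsAddCyclic ((Fin n → ℤ) ⧸ Λ) ∧ Nat.card ((Fin n → ℤ) ⧸ Λ) = p ^ r} =
      p ^ ((n - 1) * (r - 1)) * ∑ i ∈ Finset.range n, p ^ i := by
  haveI : NeZero (p ^ r) := ⟨pow_ne_zero r hp.pos.ne'⟩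
  obtain ⟨b, rfl⟩ : ∃ b, r = b + 1 := ⟨r - 1, by omega⟩
  obtain ⟨a, rfl⟩ : ∃ a, n = a + 1 := ⟨n - 1, by omega⟩
  have hU : Nat.card (ZMod (p ^ (b + 1)))ˣ = p ^ b * (p - 1) := by
    rw [Nat.card_eq_fintype_card, ZMod.card_units_eq_totient,
      Nat.totient_prime_pow hp (by omega)]
    simp
  have h1 := aux_card (a + 1) (p ^ (b + 1))
  have h2 := aux_surj_count (a + 1) p (b + 1) hp (by omega)
  simp only [Nat.add_sub_cancel] at h2
  rw [hU] at h1
  have hgeom := aux_geom p hp.one_le (a + 1)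
  set Q := ∑ i ∈ Finset.range (a + 1), p ^ i with hQ
  have hcand : (p ^ (a * b) * Q) * (p ^ b * (p - 1)) + (p ^ b) ^ (a + 1)
      = (p ^ (b + 1)) ^ (a + 1) := by
    rw [show (p ^ (a * b) * Q) * (p ^ b * (p - 1)) + (p ^ b) ^ (a + 1)
        = (p ^ b) ^ (a + 1) * (Q * (p - 1) + 1) by ring, hgeom]
    ring
  have hkpos : 0 < p ^ b * (p - 1) :=
    Nat.mul_pos (Nat.pow_pos (n := b) hp.pos) (by have := hp.two_le; omega)
  set T := Nat.card {Λ : Submodule ℤ (Fin (a + 1) → ℤ) //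
      IsAddCyclic ((Fin (a + 1) → ℤ) ⧸ Λ) ∧ Nat.card ((Fin (a + 1) → ℤ) ⧸ Λ) = p ^ (b + 1)}
    with hTdef
  have hmain : T = p ^ (a * b) * Q := by
    apply Nat.eq_of_mul_eq_mul_right hkpos
    set X := Nat.card {f : (Fin (a + 1) → ℤ) →ₗ[ℤ] ZMod (p ^ (b + 1)) //
      Function.Surjective f} with hX
    set Y := T * (p ^ b * (p - 1)) with hY
    set Z := (p ^ (a * b) * Q) * (p ^ b * (p - 1)) with hZ
    set W := (p ^ b) ^ (a + 1)
    set V := (p ^ (b + 1)) ^ (a + 1)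
    clear_value X Y Z W V
    omega
  have hdiv : (p ^ (a + 1) - 1) / (p - 1) = Q := by
    have h5 : p ^ (a + 1) - 1 = Q * (p - 1) := Nat.sub_eq_of_eq_add hgeom.symm
    rw [h5, Nat.mul_div_cancel _ (by have := hp.two_le; omega)]
  simp only [Nat.add_sub_cancel]
  rw [hdiv]
  exact ⟨hmain, hmain⟩
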